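/- Let (X,d) be a complete metric space, let p and L be positive integers, for each i ∈ {1,...,L} let f_i : X^p → X be a contraction with respect to the maximum metric on X^p, and let A be the unique nonempty compact set with A = ⋃_{i=1}^{L} f_i(A × ... × A). If (K_n)_{n≥1} is any sequence of nonempty compact subsets of X such that K_{n+p} = ⋃_{i=1}^{L} f_i(K_n × K_{n+1} × ... × K_{n+p-1}) for every n ≥ 1, then (K_n) converges to A with respect to the Hausdorff–Pompeiu metric. -/

import Mathlib

open EMetric Set ENNReal

/-- Hausdorff edistance of unions is at most the sup of pairwise Hausdorff edistances. -/
lemma aux_hE_iUnion_le {X : Type*} [PseudoEMetricSpace X] {ι : Type*} (s t : ι → Set X) :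
    hausdorffEdist (⋃ i, s i) (⋃ i, t i) ≤ ⨆ i, hausdorffEdist (s i) (t i) := by
  apply hausdorffEdist_le_of_infEdist
  · intro x hx
    obtain ⟨i, hi⟩ := Set.mem_iUnion.1 hx
    calc infEdist x (⋃ i, t i) ≤ infEdist x (t i) := infEdist_anti (Set.subset_iUnion t i)
      _ ≤ hausdorffEdist (s i) (t i) := infEdist_le_hausdorffEdist_of_mem hi
      _ ≤ _ := le_iSup (fun i => hausdorffEdist (s i) (t i)) i
  · intro x hx
    obtain ⟨i, hi⟩ := Set.mem_iUnion.1 hx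
    calc infEdist x (⋃ i, s i) ≤ infEdist x (s i) := infEdist_anti (Set.subset_iUnion s i)
      _ ≤ hausdorffEdist (t i) (s i) := infEdist_le_hausdorffEdist_of_mem hi
      _ = hausdorffEdist (s i) (t i) := hausdorffEdist_comm
      _ ≤ _ := le_iSup (fun i => hausdorffEdist (s i) (t i)) i

lemma aux_infEdist_image_le {α β : Type*} [PseudoMetricSpace α] [PseudoEMetricSpace β]
    {c : NNReal} (hc : c ≤ 1) {f : α → β} (hf : LipschitzWith c f)
    {t : Set α} (ht : t.Nonempty) (a : α) :
    infEdist (f a) (f '' t) ≤ c * infEdist a t := by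
  have hfin : infEdist a t ≠ ⊤ := by
    obtain ⟨y, hy⟩ := ht
    exact ne_top_of_le_ne_top (edist_ne_top a y) (infEdist_le_edist_of_mem hy)
  apply ENNReal.le_of_forall_pos_le_add
  intro ε hε _
  have hlt : infEdist a t < infEdist a t + ε :=
    ENNReal.lt_add_right hfin (by exact_mod_cast hε.ne')
  obtain ⟨y, hy, hdy⟩ := infEdist_lt_iff.1 hlt
  calc infEdist (f a) (f '' t) ≤ edist (f a) (f y) :=
        infEdist_le_edist_of_mem (Set.mem_image_of_mem f hy)
    _ ≤ c * edist a y := hf a y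
    _ ≤ c * (infEdist a t + ε) := mul_le_mul_right hdy.le _
    _ = c * infEdist a t + c * ε := mul_add _ _ _
    _ ≤ c * infEdist a t + ε := by
        gcongr
        calc (c : ℝ≥0∞) * ε ≤ 1 * ε := by gcongr; exact_mod_cast hc
          _ = ε := one_mul _

/-- Lipschitz maps with constant ≤ 1 contract Hausdorff edistance accordingly. -/
lemma aux_hE_image_le {α β : Type*} [PseudoMetricSpace α] [PseudoEMetricSpace β]
    {c : NNReal} (hc : c ≤ 1) {f : α → β} (hf : LipschitzWith c f)
    {s t : Set α} (hs : s.Nonempty) (ht : t.Nonempty) :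
    hausdorffEdist (f '' s) (f '' t) ≤ c * hausdorffEdist s t := by
  apply hausdorffEdist_le_of_infEdist
  · rintro x ⟨a, ha, rfl⟩
    calc infEdist (f a) (f '' t) ≤ c * infEdist a t := aux_infEdist_image_le hc hf ht a
      _ ≤ c * hausdorffEdist s t := by gcongr; exact infEdist_le_hausdorffEdist_of_mem ha
  · rintro x ⟨a, ha, rfl⟩
    calc infEdist (f a) (f '' s) ≤ c * infEdist a s := aux_infEdist_image_le hc hf hs a
      _ ≤ c * hausdorffEdist t s := by gcongr; exact infEdist_le_hausdorffEdist_of_mem ha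
      _ = c * hausdorffEdist s t := by rw [hausdorffEdist, hausdorffEdist_comm]

lemma aux_infEdist_pi_le {X : Type*} [PseudoMetricSpace X] {p : ℕ}
    (S T : Fin p → Set X) (hT : ∀ j, (T j).Nonempty)
    (x : Fin p → X) (hx : x ∈ Set.univ.pi S)
    {M : ℝ≥0∞} (hM : ∀ j, hausdorffEdist (S j) (T j) ≤ M) :
    infEdist x (Set.univ.pi T) ≤ M := by
  apply ENNReal.le_of_forall_pos_le_add
  intro ε hε hMtop
  have hj : ∀ j, infEdist (x j) (T j) < M + ε := fun j => by
    calc infEdist (x j) (T j) ≤ hausdorffEdist (S j) (T j) :=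
          infEdist_le_hausdorffEdist_of_mem (hx j (Set.mem_univ j))
      _ ≤ M := hM j
      _ < M + ε := ENNReal.lt_add_right hMtop.ne (by exact_mod_cast hε.ne')
  choose y hy hd using fun j => infEdist_lt_iff.1 (hj j)
  have hmem : y ∈ Set.univ.pi T := fun j _ => hy j
  calc infEdist x (Set.univ.pi T) ≤ edist x y := infEdist_le_edist_of_mem hmem
    _ ≤ M + ε := edist_pi_le_iff.2 fun j => (hd j).le

/-- Hausdorff edistance of products (sup metric) is at most the sup of coordinatewise ones. -/
lemma aux_hE_pi_le {X : Type*} [PseudoMetricSpace X] {p : ℕ}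
    (S T : Fin p → Set X) (hS : ∀ j, (S j).Nonempty) (hT : ∀ j, (T j).Nonempty) :
    hausdorffEdist (Set.univ.pi S) (Set.univ.pi T) ≤ ⨆ j, hausdorffEdist (S j) (T j) := by
  apply hausdorffEdist_le_of_infEdist
  · intro x hx
    exact aux_infEdist_pi_le S T hT x hx (fun j => le_iSup (fun j => hausdorffEdist (S j) (T j)) j)
  · intro x hx
    refine aux_infEdist_pi_le T S hS x hx (fun j => ?_)
    rw [hausdorffEdist, hausdorffEdist_comm]; exact le_iSup (fun j => hausdorffEdist (S j) (T j)) j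


/-- Theorem 2.2 (convergence part): if `A` is the unique nonempty compact attractor of a
GIFS `(f i)` of order `p`, and `(K n)` is a sequence of nonempty compact sets satisfying
`K (n+p) = ⋃ i, f i (K n × K (n+1) × ... × K (n+p-1))` for all `n ≥ 1`, then `K n → A`
in the Hausdorff–Pompeiu metric. -/
theorem gifs_attractor_tendsto
    {X : Type*} [MetricSpace X] [CompleteSpace X]
    (p L : ℕ) (hp : 0 < p) (hL : 0 < L)
    (f : Fin L → (Fin p → X) → X)
    (C : Fin L → NNReal) (hC : ∀ i, C i < 1)
    (hf : ∀ i, LipschitzWith (C i) (f i))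
    (A : Set X) (hA : A.Nonempty) (hAc : IsCompact A)
    (hAfix : A = ⋃ i, f i '' (Set.univ.pi fun _ : Fin p => A))
    (hAuniq : ∀ B : Set X, B.Nonempty → IsCompact B →
      B = ⋃ i, f i '' (Set.univ.pi fun _ : Fin p => B) → B = A)
    (K : ℕ → Set X) (hKne : ∀ n, (K n).Nonempty) (hKc : ∀ n, IsCompact (K n))
    (hKrec : ∀ n, 1 ≤ n →
      K (n + p) = ⋃ i, f i '' (Set.univ.pi fun j : Fin p => K (n + (j : ℕ)))) :
    Filter.Tendsto (fun n => Metric.hausdorffDist (K n) A) Filter.atTop (nhds 0) := by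
  haveI : Nonempty (Fin L) := ⟨⟨0, hL⟩⟩
  haveI : Nonempty (Fin p) := ⟨⟨0, hp⟩⟩
  set c : NNReal := Finset.univ.sup C with hc_def
  have hCc : ∀ i, C i ≤ c := fun i => Finset.le_sup (Finset.mem_univ i)
  have hc1 : c < 1 := by
    rw [hc_def, Finset.sup_lt_iff (by norm_num : (⊥ : NNReal) < 1)]
    exact fun i _ => hC i
  set D : ℕ → ℝ≥0∞ := fun n => hausdorffEdist (K n) A with hD_def
  have hDfin : ∀ n, D n ≠ ⊤ := fun n =>
    Metric.hausdorffEdist_ne_top_of_nonempty_of_bounded (hKne n) hA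
      (hKc n).isBounded hAc.isBounded
  -- key recursion
  have hrec : ∀ n, 1 ≤ n → D (n + p) ≤ c * ⨆ j : Fin p, D (n + (j : ℕ)) := by
    intro n hn
    have hpiK : (Set.univ.pi fun j : Fin p => K (n + (j : ℕ))).Nonempty :=
      ⟨fun j => (hKne (n + (j : ℕ))).choose, fun j _ => (hKne (n + (j : ℕ))).choose_spec⟩
    have hpiA : (Set.univ.pi fun _ : Fin p => A).Nonempty :=
      ⟨fun _ => hA.choose, fun _ _ => hA.choose_spec⟩
    have h1 : D (n + p) = hausdorffEdist
        (⋃ i, f i '' (Set.univ.pi fun j : Fin p => K (n + (j : ℕ))))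
        (⋃ i, f i '' (Set.univ.pi fun _ : Fin p => A)) := by
      rw [hD_def]
      simp only
      rw [hKrec n hn, ← hAfix]
    rw [h1]
    have hpi : hausdorffEdist (Set.univ.pi fun j : Fin p => K (n + (j : ℕ)))
        (Set.univ.pi fun _ : Fin p => A) ≤ ⨆ j : Fin p, D (n + (j : ℕ)) :=
      aux_hE_pi_le _ _ (fun j => hKne _) (fun _ => hA)
    calc hausdorffEdist _ _
        ≤ ⨆ i, hausdorffEdist (f i '' (Set.univ.pi fun j : Fin p => K (n + (j : ℕ))))
            (f i '' (Set.univ.pi fun _ : Fin p => A)) := aux_hE_iUnion_le _ _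
      _ ≤ c * ⨆ j : Fin p, D (n + (j : ℕ)) := by
          apply iSup_le
          intro i
          calc hausdorffEdist _ _
              ≤ (C i : ℝ≥0∞) * hausdorffEdist (Set.univ.pi fun j : Fin p => K (n + (j : ℕ)))
                (Set.univ.pi fun _ : Fin p => A) :=
                aux_hE_image_le (hC i).le (hf i) hpiK hpiA
            _ ≤ (c : ℝ≥0∞) * ⨆ j : Fin p, D (n + (j : ℕ)) := by
                gcongr
                exact_mod_cast hCc i
  -- uniform bound
  set M : ℝ≥0∞ := (Finset.Icc 1 p).sup D with hM_def
  have hMfin : M ≠ ⊤ := by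
    rw [hM_def]
    rw [← lt_top_iff_ne_top, Finset.sup_lt_iff (by simp : (⊥ : ℝ≥0∞) < ⊤)]
    exact fun n _ => (hDfin n).lt_top
  have hbd : ∀ n, 1 ≤ n → D n ≤ M := by
    intro n
    induction n using Nat.strong_induction_on with
    | _ n ih =>
      intro hn
      rcases le_or_gt n p with h | h
      · exact Finset.le_sup (Finset.mem_Icc.2 ⟨hn, h⟩)
      · have hsub : n - p + p = n := Nat.sub_add_cancel h.le
        have hn1 : 1 ≤ n - p := Nat.le_sub_of_add_le (by omega)
        have := hrec (n - p) hn1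
        rw [hsub] at this
        refine this.trans ?_
        calc c * ⨆ j : Fin p, D (n - p + (j : ℕ)) ≤ c * M := by
              gcongr
              apply iSup_le
              intro j
              exact ih (n - p + (j : ℕ)) (by omega) (by omega)
          _ ≤ 1 * M := by gcongr; exact_mod_cast hc1.le
          _ = M := one_mul M
  -- geometric decay
  have hdec : ∀ m n, 1 + m * p ≤ n → D n ≤ (c : ℝ≥0∞) ^ m * M := by
    intro m
    induction m with
    | zero => intro n hn; simpa using hbd n (by omega)
    | succ m ih =>
      intro n hn
      have hple : p < n := by nlinarith
      have hsub : n - p + p = n := Nat.sub_add_cancel hple.le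
      have hn1 : 1 ≤ n - p := by omega
      have := hrec (n - p) hn1
      rw [hsub] at this
      refine this.trans ?_
      calc c * ⨆ j : Fin p, D (n - p + (j : ℕ)) ≤ c * ((c : ℝ≥0∞) ^ m * M) := by
            gcongr
            apply iSup_le
            intro j
            refine ih (n - p + (j : ℕ)) ?_
            have h2 : (m + 1) * p = m * p + p := by ring
            omega
        _ = (c : ℝ≥0∞) ^ (m + 1) * M := by ring
  -- convergence in ℝ≥0∞
  have hD0 : Filter.Tendsto D Filter.atTop (nhds 0) := by
    rw [ENNReal.tendsto_atTop_zero]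
    intro ε hε
    have hpow : Filter.Tendsto (fun m : ℕ => (c : ℝ≥0∞) ^ m * M) Filter.atTop (nhds 0) := by
      have h1 : Filter.Tendsto (fun m : ℕ => (c : ℝ≥0∞) ^ m) Filter.atTop (nhds 0) :=
        ENNReal.tendsto_pow_atTop_nhds_zero_of_lt_one (by exact_mod_cast hc1)
      simpa using ENNReal.Tendsto.mul_const h1 (Or.inr hMfin)
    obtain ⟨m, hm⟩ := (ENNReal.tendsto_atTop_zero.1 hpow) ε hε
    refine ⟨1 + m * p, fun n hn => ?_⟩
    exact (hdec m n hn).trans (hm m le_rfl)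
  -- conclude for hausdorffDist
  have : Filter.Tendsto (fun n => (D n).toReal) Filter.atTop (nhds (0 : ℝ≥0∞).toReal) :=
    (ENNReal.tendsto_toReal (by simp)).comp hD0
  simpa [Metric.hausdorffDist, hD_def, hausdorffEdist] using this
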